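/- If i : (X_1, ρ¹) → (X_2, ρ²) is an isometric embedding of compact metric spaces, then I(i) : (I(X_1), ρ¹_I) → (I(X_2), ρ²_I) is an isometric embedding, where ρ_I is the admissible-measure metric on the space of idempotent probability measures. -/

import Mathlib

/-- An idempotent probability measure on `X`: a functional on `C(X, ℝ)` preserving constants,
shifting under addition of constants, and turning pointwise max into max. -/
def IsIPM (X : Type*) [TopologicalSpace X] (μ : C(X, ℝ) → ℝ) : Prop :=
  (∀ c : ℝ, μ (ContinuousMap.const X c) = c) ∧
  (∀ (φ : C(X, ℝ)) (c : ℝ), μ (φ + ContinuousMap.const X c) = μ φ + c) ∧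
  (∀ φ ψ : C(X, ℝ), μ (φ ⊔ ψ) = max (μ φ) (μ ψ))


/-- Pushforward of a functional along a continuous map: `I(f)(μ)(φ) = μ(φ ∘ f)`. -/
def IPMmap {X Y : Type*} [TopologicalSpace X] [TopologicalSpace Y]
    (f : C(X, Y)) (μ : C(X, ℝ) → ℝ) : C(Y, ℝ) → ℝ :=
  fun φ => μ (φ.comp f)


/-- The support of `μ`: intersection of all closed `A ⊆ X` such that `μ` comes from an
idempotent probability measure on `A`. -/
def IPMsupp {X : Type*} [TopologicalSpace X] (μ : C(X, ℝ) → ℝ) : Set X :=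
  ⋂₀ {A : Set X | IsClosed A ∧ ∃ ν : C(A, ℝ) → ℝ, IsIPM A ν ∧
      ∀ φ : C(X, ℝ), μ φ = ν (φ.restrict A)}

/-- The set `Λ(μ₁, μ₂)` of admissible measures on `X × X` with marginals `μ₁`, `μ₂`. -/
def AdmSet {X : Type*} [TopologicalSpace X] (μ₁ μ₂ : C(X, ℝ) → ℝ) :
    Set (C(X × X, ℝ) → ℝ) :=
  {ξ | IsIPM (X × X) ξ ∧ IPMmap ContinuousMap.fst ξ = μ₁ ∧ IPMmap ContinuousMap.snd ξ = μ₂}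

/-- `ρ_I(μ₁, μ₂) = inf { sup { d(x,y) : (x,y) ∈ supp ξ } : ξ ∈ Λ(μ₁, μ₂) }`,
with respect to a distance function `d` on `X`. -/
noncomputable def rhoID {X : Type*} [TopologicalSpace X] (d : X → X → ℝ)
    (μ₁ μ₂ : C(X, ℝ) → ℝ) : ℝ :=
  sInf ((fun ξ => sSup ((fun p : X × X => d p.1 p.2) '' IPMsupp ξ)) '' AdmSet μ₁ μ₂)
namespace RhoIAux

open Metric Set

variable {X : Type*} [TopologicalSpace X] {μ : C(X, ℝ) → ℝ}

/-- `μ` is determined by the values of functions on `A`. -/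
def Factors (μ : C(X, ℝ) → ℝ) (A : Set X) : Prop :=
  ∀ φ ψ : C(X, ℝ), (∀ x ∈ A, φ x = ψ x) → μ φ = μ ψ

theorem ipm_mono (hμ : IsIPM X μ) {φ ψ : C(X, ℝ)} (h : ∀ x, φ x ≤ ψ x) : μ φ ≤ μ ψ := by
  have hsup : φ ⊔ ψ = ψ := by ext x; exact sup_eq_right.2 (h x)
  have := hμ.2.2 φ ψ
  rw [hsup] at this
  rw [this]; exact le_max_left _ _

theorem factors_mono (hμ : IsIPM X μ) {A : Set X} (hA : Factors μ A) {φ ψ : C(X, ℝ)}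
    (h : ∀ x ∈ A, φ x ≤ ψ x) : μ φ ≤ μ ψ := by
  have h1 : μ (φ ⊔ ψ) = μ ψ := hA (φ ⊔ ψ) ψ (fun x hx => sup_eq_right.2 (h x hx))
  have h2 := hμ.2.2 φ ψ
  calc μ φ ≤ max (μ φ) (μ ψ) := le_max_left _ _
  _ = μ (φ ⊔ ψ) := h2.symm
  _ = μ ψ := h1

theorem factors_nonempty (hμ : IsIPM X μ) {A : Set X} (hA : Factors μ A) : A.Nonempty := by
  rcases A.eq_empty_or_nonempty with h | h
  · exfalso
    have : μ (ContinuousMap.const X (0:ℝ)) = μ (ContinuousMap.const X 1) := by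
      apply hA; intro x hx; rw [h] at hx; exact absurd hx (Set.notMem_empty x)
    rw [hμ.1 0, hμ.1 1] at this; norm_num at this
  · exact h

theorem factors_of_exists {A : Set X}
    (h : ∃ ν : C(A, ℝ) → ℝ, IsIPM A ν ∧ ∀ φ : C(X, ℝ), μ φ = ν (φ.restrict A)) :
    Factors μ A := by
  obtain ⟨ν, _, hfact⟩ := h
  intro φ ψ hagree
  rw [hfact φ, hfact ψ]
  congr 1
  ext x
  exact hagree x x.2

theorem exists_of_factors [NormalSpace X] (hμ : IsIPM X μ) {A : Set X} (hAc : IsClosed A)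
    (hF : Factors μ A) :
    ∃ ν : C(A, ℝ) → ℝ, IsIPM A ν ∧ ∀ φ : C(X, ℝ), μ φ = ν (φ.restrict A) := by
  have hE : ∀ θ : C(A, ℝ), ∃ g : C(X, ℝ), g.restrict A = θ :=
    fun θ => ContinuousMap.exists_restrict_eq hAc θ
  choose E hEspec using hE
  have hEval : ∀ (θ : C(A, ℝ)) (x : X) (hx : x ∈ A), E θ x = θ ⟨x, hx⟩ := by
    intro θ x hx
    have := ContinuousMap.congr_fun (hEspec θ) ⟨x, hx⟩
    simpa using this
  set ν : C(A, ℝ) → ℝ := fun θ => μ (E θ) with hν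
  have key : ∀ (θ : C(A, ℝ)) (g : C(X, ℝ)), (∀ x (hx : x ∈ A), g x = θ ⟨x, hx⟩) →
      ν θ = μ g := by
    intro θ g hg
    exact hF (E θ) g (fun x hx => by rw [hEval θ x hx, hg x hx])
  refine ⟨ν, ⟨?_, ?_, ?_⟩, ?_⟩
  · intro c
    rw [key (ContinuousMap.const A c) (ContinuousMap.const X c) (fun x hx => rfl)]
    exact hμ.1 c
  · intro θ c
    rw [key (θ + ContinuousMap.const A c) (E θ + ContinuousMap.const X c)
      (fun x hx => by simp [hEval θ x hx])]
    rw [hμ.2.1]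
  · intro θ₁ θ₂
    rw [key (θ₁ ⊔ θ₂) (E θ₁ ⊔ E θ₂)
      (fun x hx => by simp [hEval θ₁ x hx, hEval θ₂ x hx])]
    exact hμ.2.2 _ _
  · intro φ
    exact (key (φ.restrict A) φ (fun x hx => rfl)).symm

theorem supp_eq [NormalSpace X] (hμ : IsIPM X μ) :
    IPMsupp μ = ⋂₀ {A : Set X | IsClosed A ∧ Factors μ A} := by
  unfold IPMsupp
  have : {A : Set X | IsClosed A ∧ ∃ ν : C(A, ℝ) → ℝ, IsIPM A ν ∧
      ∀ φ : C(X, ℝ), μ φ = ν (φ.restrict A)} = {A : Set X | IsClosed A ∧ Factors μ A} := by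
    ext A
    simp only [Set.mem_setOf_eq]
    exact ⟨fun ⟨h1, h2⟩ => ⟨h1, factors_of_exists h2⟩,
      fun ⟨h1, h2⟩ => ⟨h1, exists_of_factors hμ h1 h2⟩⟩
  rw [this]

theorem supp_subset [NormalSpace X] (hμ : IsIPM X μ) {A : Set X} (hAc : IsClosed A)
    (hF : Factors μ A) : IPMsupp μ ⊆ A := by
  rw [supp_eq hμ]
  exact sInter_subset_of_mem ⟨hAc, hF⟩

theorem isClosed_supp : IsClosed (IPMsupp μ) :=
  isClosed_sInter (fun A hA => hA.1)

section Bump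

variable {Y : Type*} [MetricSpace Y]

/-- A continuous bump: `-C` on `B`, `R` far from `B`. -/
theorem exists_bump (B : Set Y) {η : ℝ} (hη : 0 < η) (C R : ℝ) :
    ∃ h : C(Y, ℝ), (∀ x ∈ B, h x = -C) ∧ (∀ x : Y, η ≤ infDist x B → h x = R) := by
  refine ⟨⟨fun x => -C + (R + C) * min 1 (infDist x B / η), ?_⟩, ?_, ?_⟩
  · exact continuous_const.add (continuous_const.mul
      (continuous_const.min ((continuous_infDist_pt B).div_const η)))
  · intro x hx
    simp [infDist_zero_of_mem hx]
  · intro x hx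
    have h1 : (1:ℝ) ≤ infDist x B / η := (one_le_div hη).2 hx
    have : min 1 (infDist x B / η) = 1 := min_eq_left h1
    simp only [ContinuousMap.coe_mk, this]
    ring

variable [CompactSpace Y] {μ : C(Y, ℝ) → ℝ}

theorem factors_inter_le (hμ : IsIPM Y μ) {A B : Set Y}
    (hAc : IsClosed A) (hBc : IsClosed B) (hFA : Factors μ A) (hFB : Factors μ B)
    {φ ψ : C(Y, ℝ)} (h : ∀ x ∈ A ∩ B, φ x ≤ ψ x) : μ φ ≤ μ ψ := by
  have hBne : B.Nonempty := factors_nonempty hμ hFB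
  refine le_of_forall_pos_le_add ?_
  intro ε hε
  set T : Set Y := A ∩ {x | ψ x + ε ≤ φ x} with hT
  have hTc : IsClosed T :=
    hAc.inter (isClosed_le (ψ.continuous.add continuous_const) φ.continuous)
  have hTB : ∀ x ∈ T, x ∉ B := by
    rintro x ⟨hxA, hxle⟩ hxB
    have := h x ⟨hxA, hxB⟩
    simp only [Set.mem_setOf_eq] at hxle
    linarith
  obtain ⟨η, hη, hηT⟩ : ∃ η : ℝ, 0 < η ∧ ∀ x ∈ T, η ≤ infDist x B := by
    rcases T.eq_empty_or_nonempty with hTe | hTne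
    · exact ⟨1, one_pos, fun x hx => absurd (hTe ▸ hx) (Set.notMem_empty x)⟩
    · obtain ⟨x₀, hx₀, hmin⟩ := hTc.isCompact.exists_isMinOn hTne
        (continuous_infDist_pt B).continuousOn
      refine ⟨infDist x₀ B, (hBc.notMem_iff_infDist_pos hBne).1 (hTB x₀ hx₀), ?_⟩
      exact fun x hx => hmin hx
  set R : ℝ := ‖φ‖ with hR
  set C : ℝ := |μ ψ| + ε with hC
  obtain ⟨g, hgB, hgFar⟩ := exists_bump B hη C R
  -- on A, φ ≤ (ψ + ε) ⊔ g
  have hkey : ∀ x ∈ A, φ x ≤ ((ψ + ContinuousMap.const Y ε) ⊔ g) x := by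
    intro x hxA
    rcases le_or_gt η (infDist x B) with hfar | hnear
    · refine le_trans ?_ (le_sup_right)
      rw [hgFar x hfar]
      calc φ x ≤ ‖φ x‖ := le_abs_self _
      _ ≤ ‖φ‖ := φ.norm_coe_le_norm x
    · refine le_trans ?_ (le_sup_left)
      have hxT : x ∉ T := by
        intro hxT
        exact absurd (hηT x hxT) (not_le.2 hnear)
      have : ¬ (ψ x + ε ≤ φ x) := fun hc => hxT ⟨hxA, hc⟩
      simp only [ContinuousMap.add_apply, ContinuousMap.const_apply]
      linarith
  have h1 : μ φ ≤ μ ((ψ + ContinuousMap.const Y ε) ⊔ g) := factors_mono hμ hFA hkey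
  have h2 : μ ((ψ + ContinuousMap.const Y ε) ⊔ g)
      = max (μ (ψ + ContinuousMap.const Y ε)) (μ g) := hμ.2.2 _ _
  have h3 : μ (ψ + ContinuousMap.const Y ε) = μ ψ + ε := hμ.2.1 _ _
  have h4 : μ g ≤ μ (ContinuousMap.const Y (-C)) :=
    factors_mono hμ hFB (fun x hx => by rw [hgB x hx]; simp)
  rw [hμ.1] at h4
  have h5 : -C ≤ μ ψ + ε := by
    have := neg_abs_le (μ ψ)
    simp only [hC]
    linarith
  calc μ φ ≤ max (μ (ψ + ContinuousMap.const Y ε)) (μ g) := h2 ▸ h1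
  _ ≤ μ ψ + ε := max_le (le_of_eq h3) (le_trans h4 h5)

theorem factors_inter (hμ : IsIPM Y μ) {A B : Set Y}
    (hAc : IsClosed A) (hBc : IsClosed B) (hFA : Factors μ A) (hFB : Factors μ B) :
    Factors μ (A ∩ B) := by
  intro φ ψ h
  exact le_antisymm
    (factors_inter_le hμ hAc hBc hFA hFB (fun x hx => le_of_eq (h x hx)))
    (factors_inter_le hμ hAc hBc hFA hFB (fun x hx => ge_of_eq (h x hx)))

omit [CompactSpace Y] in
theorem factors_univ : Factors μ (Set.univ : Set Y) := by
  intro φ ψ h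
  congr 1
  ext x
  exact h x (Set.mem_univ x)

theorem factors_finsetInter (hμ : IsIPM Y μ)
    (t : Finset {A : Set Y // IsClosed A ∧ Factors μ A}) :
    IsClosed (⋂ A ∈ t, (↑A : Set Y)) ∧ Factors μ (⋂ A ∈ t, (↑A : Set Y)) := by
  classical
  induction t using Finset.induction with
  | empty =>
    refine ⟨by simp, ?_⟩
    have : (⋂ A ∈ (∅ : Finset {A : Set Y // IsClosed A ∧ Factors μ A}), (↑A : Set Y))
        = Set.univ := by simp
    rw [this]
    exact factors_univ
  | @insert a s hnotmem ih =>
    rw [Finset.set_biInter_insert]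
    exact ⟨a.2.1.inter ih.1, factors_inter hμ a.2.1 ih.1 a.2.2 ih.2⟩

/-- The support theorem: an idempotent probability measure on a compact metric space
factors through its support. -/
theorem factors_supp (hμ : IsIPM Y μ) : Factors μ (IPMsupp μ) := by
  have hle : ∀ φ ψ : C(Y, ℝ), (∀ x ∈ IPMsupp μ, φ x ≤ ψ x) → μ φ ≤ μ ψ := by
    intro φ ψ h
    refine le_of_forall_pos_le_add ?_
    intro ε hε
    set T : Set Y := {x | ψ x + ε ≤ φ x} with hT
    have hTc : IsClosed T := isClosed_le (ψ.continuous.add continuous_const) φ.continuous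
    -- T is covered by the complements of the factor sets
    have hcover : T ⊆ ⋃ A : {A : Set Y // IsClosed A ∧ Factors μ A}, (↑A : Set Y)ᶜ := by
      intro x hx
      have hxs : x ∉ IPMsupp μ := by
        intro hxs
        have := h x hxs
        simp only [hT, Set.mem_setOf_eq] at hx
        linarith
      rw [supp_eq hμ] at hxs
      simp only [Set.mem_sInter, not_forall] at hxs
      obtain ⟨A, hA, hxA⟩ := hxs
      exact Set.mem_iUnion.2 ⟨⟨A, hA⟩, hxA⟩
    obtain ⟨t, ht⟩ := hTc.isCompact.elim_finite_subcover _
      (fun A : {A : Set Y // IsClosed A ∧ Factors μ A} => A.2.1.isOpen_compl) hcover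
    -- the finite intersection
    set A₀ : Set Y := ⋂ A ∈ t, (↑A : Set Y) with hA₀
    have hA₀prop : IsClosed A₀ ∧ Factors μ A₀ := factors_finsetInter hμ t
    have hsub : ∀ x ∈ A₀, φ x ≤ (ψ + ContinuousMap.const Y ε) x := by
      intro x hx
      have hxT : x ∉ T := by
        intro hxT
        have := ht hxT
        simp only [Set.mem_iUnion] at this
        obtain ⟨A, hAt, hxA⟩ := this
        simp only [hA₀, Set.mem_iInter] at hx
        exact hxA (hx A hAt)
      simp only [hT, Set.mem_setOf_eq, not_le] at hxT
      simp only [ContinuousMap.add_apply, ContinuousMap.const_apply]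
      linarith
    calc μ φ ≤ μ (ψ + ContinuousMap.const Y ε) := factors_mono hμ hA₀prop.2 hsub
    _ = μ ψ + ε := hμ.2.1 _ _
  intro φ ψ h
  exact le_antisymm (hle φ ψ (fun x hx => le_of_eq (h x hx)))
    (hle ψ φ (fun x hx => ge_of_eq (h x hx)))

end Bump

theorem isIPM_map {X' Y : Type*} [TopologicalSpace X'] [TopologicalSpace Y]
    {μ : C(X', ℝ) → ℝ} (f : C(X', Y)) (hμ : IsIPM X' μ) : IsIPM Y (IPMmap f μ) := by
  refine ⟨fun c => ?_, fun φ c => ?_, fun φ ψ => ?_⟩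
  · have : (ContinuousMap.const Y c).comp f = ContinuousMap.const X' c := by ext x; rfl
    simp only [IPMmap, this]; exact hμ.1 c
  · have : (φ + ContinuousMap.const Y c).comp f = φ.comp f + ContinuousMap.const X' c := by
      ext x; rfl
    simp only [IPMmap, this]; exact hμ.2.1 _ _
  · have : (φ ⊔ ψ).comp f = φ.comp f ⊔ ψ.comp f := by ext x; rfl
    simp only [IPMmap, this]; exact hμ.2.2 _ _

section Marginal

variable {X₁ X₂ : Type*} [MetricSpace X₁] [CompactSpace X₁] [MetricSpace X₂] [CompactSpace X₂]

theorem nonempty_of_isIPM {μ : C(X₁, ℝ) → ℝ} (hμ : IsIPM X₁ μ) : Nonempty X₁ := by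
  by_contra h
  have hc : (ContinuousMap.const X₁ (0:ℝ)) = ContinuousMap.const X₁ 1 := by
    ext x; exact absurd ⟨x⟩ h
  have h0 := hμ.1 0
  rw [hc, hμ.1 1] at h0
  norm_num at h0

theorem marginal_le (i : X₁ → X₂) (hi : Isometry i) {μ ν : C(X₁, ℝ) → ℝ}
    (hμ : IsIPM X₁ μ) (hν : IsIPM X₁ ν) {ξ : C(X₂ × X₂, ℝ) → ℝ} (hξ : IsIPM (X₂ × X₂) ξ)
    (h1 : IPMmap ContinuousMap.fst ξ = IPMmap ⟨i, hi.continuous⟩ μ)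
    (h2 : IPMmap ContinuousMap.snd ξ = IPMmap ⟨i, hi.continuous⟩ ν)
    {φ ψ : C(X₂ × X₂, ℝ)} (h : ∀ a b : X₁, φ (i a, i b) ≤ ψ (i a, i b)) : ξ φ ≤ ξ ψ := by
  have hne : Nonempty X₁ := nonempty_of_isIPM hμ
  set A : Set X₂ := Set.range i with hA
  have hAc : IsClosed A := hi.isClosedEmbedding.isClosed_range
  have hAne : A.Nonempty := Set.range_nonempty i
  refine le_of_forall_pos_le_add ?_
  intro ε hε
  set T : Set (X₂ × X₂) := {p | ψ p + ε ≤ φ p} with hT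
  have hTc : IsClosed T := isClosed_le (ψ.continuous.add continuous_const) φ.continuous
  have hTA : ∀ p ∈ T, p.1 ∉ A ∨ p.2 ∉ A := by
    intro p hp
    by_contra hcon
    push_neg at hcon
    obtain ⟨a, ha⟩ := hcon.1
    obtain ⟨b, hb⟩ := hcon.2
    have hpe : p = (i a, i b) := by
      cases p
      simp only [Prod.mk.injEq]
      exact ⟨ha.symm, hb.symm⟩
    have := h a b
    rw [← hpe] at this
    simp only [hT, Set.mem_setOf_eq] at hp
    linarith
  set m : (X₂ × X₂) → ℝ := fun p => max (infDist p.1 A) (infDist p.2 A) with hm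
  have hmc : Continuous m :=
    ((continuous_infDist_pt A).comp continuous_fst).max
      ((continuous_infDist_pt A).comp continuous_snd)
  have hmpos : ∀ p ∈ T, 0 < m p := by
    intro p hp
    rcases hTA p hp with h' | h'
    · exact lt_of_lt_of_le ((hAc.notMem_iff_infDist_pos hAne).1 h') (le_max_left _ _)
    · exact lt_of_lt_of_le ((hAc.notMem_iff_infDist_pos hAne).1 h') (le_max_right _ _)
  obtain ⟨η, hη, hηT⟩ : ∃ η : ℝ, 0 < η ∧ ∀ p ∈ T, η ≤ m p := by
    rcases T.eq_empty_or_nonempty with hTe | hTne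
    · exact ⟨1, one_pos, fun p hp => absurd (hTe ▸ hp) (Set.notMem_empty p)⟩
    · obtain ⟨p₀, hp₀, hmin⟩ := hTc.isCompact.exists_isMinOn hTne hmc.continuousOn
      exact ⟨m p₀, hmpos p₀ hp₀, fun p hp => hmin hp⟩
  set R : ℝ := ‖φ‖ with hR
  set C : ℝ := |ξ ψ| + ε with hC
  obtain ⟨g, hgA, hgFar⟩ := exists_bump A hη C R
  set G : C(X₂ × X₂, ℝ) :=
    (ψ + ContinuousMap.const _ ε) ⊔ (g.comp ContinuousMap.fst ⊔ g.comp ContinuousMap.snd)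
    with hG
  have hφG : ∀ p, φ p ≤ G p := by
    intro p
    rcases le_or_gt η (infDist p.1 A) with hfar | hnear1
    · refine le_trans ?_ (le_trans le_sup_left le_sup_right)
      show φ p ≤ g.comp ContinuousMap.fst p
      simp only [ContinuousMap.comp_apply, ContinuousMap.fst_apply]
      rw [hgFar _ hfar]
      calc φ p ≤ ‖φ p‖ := le_abs_self _
      _ ≤ ‖φ‖ := φ.norm_coe_le_norm p
    rcases le_or_gt η (infDist p.2 A) with hfar | hnear2
    · refine le_trans ?_ (le_trans le_sup_right le_sup_right)
      show φ p ≤ g.comp ContinuousMap.snd p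
      simp only [ContinuousMap.comp_apply, ContinuousMap.snd_apply]
      rw [hgFar _ hfar]
      calc φ p ≤ ‖φ p‖ := le_abs_self _
      _ ≤ ‖φ‖ := φ.norm_coe_le_norm p
    · refine le_trans ?_ le_sup_left
      have hpT : p ∉ T := by
        intro hpT
        have := hηT p hpT
        simp only [hm] at this
        rcases max_lt hnear1 hnear2 with h'
        linarith [le_trans this (le_of_lt h')]
      simp only [hT, Set.mem_setOf_eq, not_le] at hpT
      simp only [ContinuousMap.add_apply, ContinuousMap.const_apply]
      linarith
  have hfst : ξ (g.comp ContinuousMap.fst) = -C := by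
    have : ξ (g.comp ContinuousMap.fst) = IPMmap ContinuousMap.fst ξ g := rfl
    rw [this, h1]
    show μ (g.comp ⟨i, hi.continuous⟩) = -C
    have hgc : g.comp ⟨i, hi.continuous⟩ = ContinuousMap.const X₁ (-C) := by
      ext a
      exact hgA (i a) (Set.mem_range_self a)
    rw [hgc, hμ.1]
  have hsnd : ξ (g.comp ContinuousMap.snd) = -C := by
    have : ξ (g.comp ContinuousMap.snd) = IPMmap ContinuousMap.snd ξ g := rfl
    rw [this, h2]
    show ν (g.comp ⟨i, hi.continuous⟩) = -C
    have hgc : g.comp ⟨i, hi.continuous⟩ = ContinuousMap.const X₁ (-C) := by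
      ext a
      exact hgA (i a) (Set.mem_range_self a)
    rw [hgc, hν.1]
  have hCle : -C ≤ ξ ψ + ε := by
    have := neg_abs_le (ξ ψ)
    simp only [hC]
    linarith
  calc ξ φ ≤ ξ G := ipm_mono hξ hφG
  _ = max (ξ (ψ + ContinuousMap.const _ ε))
      (max (ξ (g.comp ContinuousMap.fst)) (ξ (g.comp ContinuousMap.snd))) := by
    rw [hG, hξ.2.2, hξ.2.2]
  _ ≤ ξ ψ + ε := by
    rw [hξ.2.1, hfst, hsnd]
    exact max_le (le_refl _) (max_le hCle hCle)

theorem factors_range_prod (i : X₁ → X₂) (hi : Isometry i) {μ ν : C(X₁, ℝ) → ℝ}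
    (hμ : IsIPM X₁ μ) (hν : IsIPM X₁ ν) {ξ : C(X₂ × X₂, ℝ) → ℝ} (hξ : IsIPM (X₂ × X₂) ξ)
    (h1 : IPMmap ContinuousMap.fst ξ = IPMmap ⟨i, hi.continuous⟩ μ)
    (h2 : IPMmap ContinuousMap.snd ξ = IPMmap ⟨i, hi.continuous⟩ ν) :
    Factors ξ (Set.range i ×ˢ Set.range i) := by
  intro φ ψ h
  have h' : ∀ a b : X₁, φ (i a, i b) = ψ (i a, i b) := fun a b =>
    h (i a, i b) ⟨Set.mem_range_self a, Set.mem_range_self b⟩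
  exact le_antisymm
    (marginal_le i hi hμ hν hξ h1 h2 (fun a b => le_of_eq (h' a b)))
    (marginal_le i hi hμ hν hξ h1 h2 (fun a b => ge_of_eq (h' a b)))

end Marginal

section Main

variable {X₁ X₂ : Type*} [MetricSpace X₁] [CompactSpace X₁] [MetricSpace X₂] [CompactSpace X₂]

theorem val_nonneg {Y : Type*} [MetricSpace Y] [CompactSpace Y] {ξ : C(Y × Y, ℝ) → ℝ}
    (hξ : IsIPM (Y × Y) ξ) :
    0 ≤ sSup ((fun p : Y × Y => dist p.1 p.2) '' IPMsupp ξ) := by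
  obtain ⟨p, hp⟩ := factors_nonempty hξ (factors_supp hξ)
  have hbdd : BddAbove ((fun p : Y × Y => dist p.1 p.2) '' IPMsupp ξ) :=
    ((isClosed_supp.isCompact).image (continuous_fst.dist continuous_snd)).bddAbove
  calc (0:ℝ) ≤ dist p.1 p.2 := dist_nonneg
  _ ≤ _ := le_csSup hbdd ⟨p, hp, rfl⟩

theorem push_step (i : X₁ → X₂) (hi : Isometry i) {μ ν : C(X₁, ℝ) → ℝ}
    {ξ : C(X₁ × X₁, ℝ) → ℝ} (hξ : ξ ∈ AdmSet μ ν) :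
    IPMmap ⟨Prod.map i i, (hi.prodMap hi).continuous⟩ ξ ∈
      AdmSet (IPMmap ⟨i, hi.continuous⟩ μ) (IPMmap ⟨i, hi.continuous⟩ ν) ∧
    sSup ((fun p : X₂ × X₂ => dist p.1 p.2) ''
        IPMsupp (IPMmap ⟨Prod.map i i, (hi.prodMap hi).continuous⟩ ξ)) ≤
      sSup ((fun p : X₁ × X₁ => dist p.1 p.2) '' IPMsupp ξ) := by
  obtain ⟨hξIPM, hm1, hm2⟩ := hξ
  set ii : C(X₁ × X₁, X₂ × X₂) := ⟨Prod.map i i, (hi.prodMap hi).continuous⟩ with hii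
  have hpushIPM : IsIPM (X₂ × X₂) (IPMmap ii ξ) := isIPM_map ii hξIPM
  have hmarg1 : IPMmap ContinuousMap.fst (IPMmap ii ξ) = IPMmap ⟨i, hi.continuous⟩ μ := by
    funext φ
    have hc : (φ.comp ContinuousMap.fst).comp ii
        = (φ.comp ⟨i, hi.continuous⟩).comp ContinuousMap.fst := by ext p; rfl
    show ξ ((φ.comp ContinuousMap.fst).comp ii) = μ (φ.comp ⟨i, hi.continuous⟩)
    rw [hc]
    have : ξ ((φ.comp ⟨i, hi.continuous⟩).comp ContinuousMap.fst)
        = IPMmap ContinuousMap.fst ξ (φ.comp ⟨i, hi.continuous⟩) := rfl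
    rw [this, hm1]
  have hmarg2 : IPMmap ContinuousMap.snd (IPMmap ii ξ) = IPMmap ⟨i, hi.continuous⟩ ν := by
    funext φ
    have hc : (φ.comp ContinuousMap.snd).comp ii
        = (φ.comp ⟨i, hi.continuous⟩).comp ContinuousMap.snd := by ext p; rfl
    show ξ ((φ.comp ContinuousMap.snd).comp ii) = ν (φ.comp ⟨i, hi.continuous⟩)
    rw [hc]
    have : ξ ((φ.comp ⟨i, hi.continuous⟩).comp ContinuousMap.snd)
        = IPMmap ContinuousMap.snd ξ (φ.comp ⟨i, hi.continuous⟩) := rfl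
    rw [this, hm2]
  refine ⟨⟨hpushIPM, hmarg1, hmarg2⟩, ?_⟩
  set S : Set (X₁ × X₁) := IPMsupp ξ with hS
  have hFS : Factors ξ S := factors_supp hξIPM
  have hScomp : IsCompact S := isClosed_supp.isCompact
  have himgc : IsClosed (Prod.map i i '' S) :=
    (hScomp.image (hi.prodMap hi).continuous).isClosed
  have hFimg : Factors (IPMmap ii ξ) (Prod.map i i '' S) := by
    intro φ ψ h
    exact hFS (φ.comp ii) (ψ.comp ii) (fun p hp => h (Prod.map i i p) ⟨p, hp, rfl⟩)
  have hsub : IPMsupp (IPMmap ii ξ) ⊆ Prod.map i i '' S :=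
    supp_subset hpushIPM himgc hFimg
  have himgsub : (fun p : X₂ × X₂ => dist p.1 p.2) '' IPMsupp (IPMmap ii ξ) ⊆
      (fun p : X₁ × X₁ => dist p.1 p.2) '' S := by
    rintro r ⟨q, hq, rfl⟩
    obtain ⟨p, hp, rfl⟩ := hsub hq
    exact ⟨p, hp, (hi.dist_eq p.1 p.2).symm⟩
  have hbdd : BddAbove ((fun p : X₁ × X₁ => dist p.1 p.2) '' S) :=
    (hScomp.image (continuous_fst.dist continuous_snd)).bddAbove
  have hnonempty : (IPMsupp (IPMmap ii ξ)).Nonempty :=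
    factors_nonempty hpushIPM (factors_supp hpushIPM)
  exact csSup_le_csSup hbdd (hnonempty.image _) himgsub

theorem pull_step (i : X₁ → X₂) (hi : Isometry i) {μ ν : C(X₁, ℝ) → ℝ}
    (hμ : IsIPM X₁ μ) (hν : IsIPM X₁ ν) {ξ' : C(X₂ × X₂, ℝ) → ℝ}
    (hξ' : ξ' ∈ AdmSet (IPMmap ⟨i, hi.continuous⟩ μ) (IPMmap ⟨i, hi.continuous⟩ ν)) :
    ∃ ξ ∈ AdmSet μ ν,
      sSup ((fun p : X₁ × X₁ => dist p.1 p.2) '' IPMsupp ξ) ≤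
      sSup ((fun p : X₂ × X₂ => dist p.1 p.2) '' IPMsupp ξ') := by
  obtain ⟨hξ'IPM, hm1, hm2⟩ := hξ'
  have hiCE : Topology.IsClosedEmbedding i := hi.isClosedEmbedding
  have hiiI : Isometry (Prod.map i i) := hi.prodMap hi
  have hiiCE : Topology.IsClosedEmbedding (Prod.map i i) := hiiI.isClosedEmbedding
  have hEex : ∀ Φ : C(X₁ × X₁, ℝ), ∃ g : C(X₂ × X₂, ℝ), ⇑g ∘ (Prod.map i i) = ⇑Φ :=
    fun Φ => ContinuousMap.exists_extension' hiiCE Φ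
  choose E hE using hEex
  have hEval : ∀ (Φ : C(X₁ × X₁, ℝ)) (a b : X₁), E Φ (i a, i b) = Φ (a, b) :=
    fun Φ a b => congrFun (hE Φ) (a, b)
  set ξ : C(X₁ × X₁, ℝ) → ℝ := fun Φ => ξ' (E Φ) with hξdef
  have hK : Factors ξ' (Set.range i ×ˢ Set.range i) :=
    factors_range_prod i hi hμ hν hξ'IPM hm1 hm2
  have hspec : ∀ (Φ : C(X₁ × X₁, ℝ)) (g : C(X₂ × X₂, ℝ)),
      (∀ a b : X₁, g (i a, i b) = Φ (a, b)) → ξ Φ = ξ' g := by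
    intro Φ g hg
    refine hK (E Φ) g ?_
    rintro p ⟨⟨a, ha⟩, ⟨b, hb⟩⟩
    have hp : p = (i a, i b) := by
      cases p
      simp only [Prod.mk.injEq]
      exact ⟨ha.symm, hb.symm⟩
    rw [hp, hEval, hg]
  have hξIPM : IsIPM (X₁ × X₁) ξ := by
    refine ⟨fun c => ?_, fun Φ c => ?_, fun Φ Ψ => ?_⟩
    · rw [hspec (ContinuousMap.const _ c) (ContinuousMap.const _ c) (fun a b => rfl)]
      exact hξ'IPM.1 c
    · rw [hspec (Φ + ContinuousMap.const _ c) (E Φ + ContinuousMap.const _ c)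
        (fun a b => by simp [hEval])]
      rw [hξ'IPM.2.1]
    · rw [hspec (Φ ⊔ Ψ) (E Φ ⊔ E Ψ) (fun a b => by simp [hEval])]
      exact hξ'IPM.2.2 _ _
  have hmarg1 : IPMmap ContinuousMap.fst ξ = μ := by
    funext φ
    obtain ⟨φ', hφ'⟩ := ContinuousMap.exists_extension' hiCE φ
    have h1 : ξ (φ.comp ContinuousMap.fst) = ξ' (φ'.comp ContinuousMap.fst) :=
      hspec _ _ (fun a b => congrFun hφ' a)
    have h2 : ξ' (φ'.comp ContinuousMap.fst) = IPMmap ContinuousMap.fst ξ' φ' := rfl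
    have h3 : φ'.comp ⟨i, hi.continuous⟩ = φ := by ext a; exact congrFun hφ' a
    show ξ (φ.comp ContinuousMap.fst) = μ φ
    rw [h1, h2, hm1]
    show μ (φ'.comp ⟨i, hi.continuous⟩) = μ φ
    rw [h3]
  have hmarg2 : IPMmap ContinuousMap.snd ξ = ν := by
    funext φ
    obtain ⟨φ', hφ'⟩ := ContinuousMap.exists_extension' hiCE φ
    have h1 : ξ (φ.comp ContinuousMap.snd) = ξ' (φ'.comp ContinuousMap.snd) :=
      hspec _ _ (fun a b => congrFun hφ' b)
    have h2 : ξ' (φ'.comp ContinuousMap.snd) = IPMmap ContinuousMap.snd ξ' φ' := rfl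
    have h3 : φ'.comp ⟨i, hi.continuous⟩ = φ := by ext a; exact congrFun hφ' a
    show ξ (φ.comp ContinuousMap.snd) = ν φ
    rw [h1, h2, hm2]
    show ν (φ'.comp ⟨i, hi.continuous⟩) = ν φ
    rw [h3]
  refine ⟨ξ, ⟨hξIPM, hmarg1, hmarg2⟩, ?_⟩
  set S' : Set (X₂ × X₂) := IPMsupp ξ' with hS'
  have hFS' : Factors ξ' S' := factors_supp hξ'IPM
  have hS'c : IsClosed S' := isClosed_supp
  have hKc : IsClosed (Set.range i ×ˢ Set.range i) :=
    hiCE.isClosed_range.prod hiCE.isClosed_range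
  have hF2 : Factors ξ' (S' ∩ Set.range i ×ˢ Set.range i) :=
    factors_inter hξ'IPM hS'c hKc hFS' hK
  have hPc : IsClosed (Prod.map i i ⁻¹' S') := hS'c.preimage hiiI.continuous
  have hFpre : Factors ξ (Prod.map i i ⁻¹' S') := by
    intro Φ Ψ h
    refine hF2 (E Φ) (E Ψ) ?_
    rintro p ⟨hpS, ⟨a, ha⟩, ⟨b, hb⟩⟩
    have hp : p = (i a, i b) := by
      cases p
      simp only [Prod.mk.injEq]
      exact ⟨ha.symm, hb.symm⟩
    rw [hp, hEval, hEval]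
    refine h (a, b) ?_
    show Prod.map i i (a, b) ∈ S'
    rw [hp] at hpS
    exact hpS
  have hsub : IPMsupp ξ ⊆ Prod.map i i ⁻¹' S' := supp_subset hξIPM hPc hFpre
  have himgsub : (fun p : X₁ × X₁ => dist p.1 p.2) '' IPMsupp ξ ⊆
      (fun p : X₂ × X₂ => dist p.1 p.2) '' S' := by
    rintro r ⟨p, hp, rfl⟩
    exact ⟨Prod.map i i p, hsub hp, (hi.dist_eq p.1 p.2)⟩
  have hbdd : BddAbove ((fun p : X₂ × X₂ => dist p.1 p.2) '' S') :=
    (hS'c.isCompact.image (continuous_fst.dist continuous_snd)).bddAbove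
  have hnonempty : (IPMsupp ξ).Nonempty :=
    factors_nonempty hξIPM (factors_supp hξIPM)
  exact csSup_le_csSup hbdd (hnonempty.image _) himgsub

end Main

end RhoIAux

/-- `I` of an isometric embedding is an isometric embedding for the metrics `ρ_I`. -/
theorem rhoI_isometric_embedding {X₁ X₂ : Type*} [MetricSpace X₁] [CompactSpace X₁]
    [MetricSpace X₂] [CompactSpace X₂] (i : X₁ → X₂) (hi : Isometry i)
    (μ ν : C(X₁, ℝ) → ℝ) (hμ : IsIPM X₁ μ) (hν : IsIPM X₁ ν) :
    rhoID (fun a b : X₂ => dist a b)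
      (IPMmap ⟨i, hi.continuous⟩ μ) (IPMmap ⟨i, hi.continuous⟩ ν) =
    rhoID (fun a b : X₁ => dist a b) μ ν := by
  unfold rhoID
  have hbddL : BddBelow ((fun ξ => sSup ((fun p : X₂ × X₂ => dist p.1 p.2) '' IPMsupp ξ)) ''
      AdmSet (IPMmap ⟨i, hi.continuous⟩ μ) (IPMmap ⟨i, hi.continuous⟩ ν)) := by
    refine ⟨0, ?_⟩
    rintro w ⟨ξ', hξ', rfl⟩
    exact RhoIAux.val_nonneg hξ'.1
  have hbddR : BddBelow ((fun ξ => sSup ((fun p : X₁ × X₁ => dist p.1 p.2) '' IPMsupp ξ)) ''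
      AdmSet μ ν) := by
    refine ⟨0, ?_⟩
    rintro w ⟨ξ, hξ, rfl⟩
    exact RhoIAux.val_nonneg hξ.1
  apply le_antisymm
  · rcases (AdmSet μ ν).eq_empty_or_nonempty with hR | hR
    · rcases (AdmSet (IPMmap ⟨i, hi.continuous⟩ μ)
          (IPMmap ⟨i, hi.continuous⟩ ν)).eq_empty_or_nonempty with hL | hL
      · rw [hL, hR, Set.image_empty, Set.image_empty]
      · exfalso
        obtain ⟨ξ', hξ'⟩ := hL
        obtain ⟨ξ, hξmem, -⟩ := RhoIAux.pull_step i hi hμ hν hξ'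
        rw [hR] at hξmem
        exact hξmem
    · refine le_csInf (hR.image _) ?_
      rintro v ⟨ξ, hξmem, rfl⟩
      obtain ⟨hmem, hval⟩ := RhoIAux.push_step i hi hξmem
      exact le_trans (csInf_le hbddL ⟨_, hmem, rfl⟩) hval
  · rcases (AdmSet (IPMmap ⟨i, hi.continuous⟩ μ)
        (IPMmap ⟨i, hi.continuous⟩ ν)).eq_empty_or_nonempty with hL | hL
    · rcases (AdmSet μ ν).eq_empty_or_nonempty with hR | hR
      · rw [hL, hR, Set.image_empty, Set.image_empty]
      · exfalso
        obtain ⟨ξ, hξmem⟩ := hR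
        obtain ⟨hmem, -⟩ := RhoIAux.push_step i hi hξmem
        rw [hL] at hmem
        exact hmem
    · refine le_csInf (hL.image _) ?_
      rintro w ⟨ξ', hξ'mem, rfl⟩
      obtain ⟨ξ, hmem, hval⟩ := RhoIAux.pull_step i hi hμ hν hξ'mem
      exact le_trans (csInf_le hbddR ⟨ξ, hmem, rfl⟩) hval
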